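/- For every j ∈ ℕ, every x ∈ Λ_j and every integer k with 0 ≤ k ≤ j, one has F(ψ(G^k(x))) = λ^{−k} · F(ψ(x)); equivalently, φ_α(G^k(x)) = λ^{k/α} · φ_α(x) whenever F(ψ(x)) > 0. (Deterministic core of Proposition 4.6: the spectral process takes the values Θ_k = (1−θ)^{k/α} with 1−θ = λ.) -/

import Mathlib

open Set MeasureTheory Filter
open scoped ENNReal Topology Classical

/-- The setup of Section 2 of the paper: a full-branched Markov linear map `G` on `[0,1]`
with branch domains `I_1,…,I_{k_I}` (mapped affinely onto `[0,1]`) and complementary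
intervals `J_j` (mapped affinely onto `(0,1)`), all of length at most `1/2`. -/
structure CantorData where
  kI : ℕ
  hkI : 1 ≤ kI
  a : ℕ → ℝ
  ha_lt : ∀ i, i + 1 < 2 * kI → a i < a (i + 1)
  ha0 : 0 ≤ a 0
  ha1 : a (2 * kI - 1) ≤ 1
  G : ℝ → ℝ
  hGmaps : Set.MapsTo G (Set.Icc 0 1) (Set.Icc 0 1)
  hGI : ∀ i < kI, ∃ s c : ℝ,
    |s| * (a (2 * i + 1) - a (2 * i)) = 1 ∧
    (∀ x ∈ Set.Icc (a (2 * i)) (a (2 * i + 1)), G x = s * x + c) ∧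
    Set.BijOn G (Set.Icc (a (2 * i)) (a (2 * i + 1))) (Set.Icc 0 1)
  hGJmid : ∀ i, i + 1 < kI → ∃ s c : ℝ,
    |s| * (a (2 * i + 2) - a (2 * i + 1)) = 1 ∧
    (∀ x ∈ Set.Ioo (a (2 * i + 1)) (a (2 * i + 2)), G x = s * x + c) ∧
    Set.SurjOn G (Set.Ioo (a (2 * i + 1)) (a (2 * i + 2))) (Set.Ioo 0 1)
  hGJleft : 0 < a 0 → ∃ s c : ℝ,
    |s| * a 0 = 1 ∧
    (∀ x ∈ Set.Ico 0 (a 0), G x = s * x + c) ∧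
    Set.SurjOn G (Set.Ico 0 (a 0)) (Set.Ioo 0 1)
  hGJright : a (2 * kI - 1) < 1 → ∃ s c : ℝ,
    |s| * (1 - a (2 * kI - 1)) = 1 ∧
    (∀ x ∈ Set.Ioc (a (2 * kI - 1)) 1, G x = s * x + c) ∧
    Set.SurjOn G (Set.Ioc (a (2 * kI - 1)) 1) (Set.Ioo 0 1)
  hIlen : ∀ i < kI, a (2 * i + 1) - a (2 * i) ≤ 1 / 2
  hJlenL : a 0 ≤ 1 / 2
  hJlenR : 1 - a (2 * kI - 1) ≤ 1 / 2
  hJlenM : ∀ i, i + 1 < kI → a (2 * i + 2) - a (2 * i + 1) ≤ 1 / 2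
  hkJ : (Set.Icc (0:ℝ) 1 \ ⋃ i ∈ Finset.range kI,
      Set.Icc (a (2 * i)) (a (2 * i + 1))).Nonempty

namespace CantorData

variable (S : CantorData)

/-- The union `⋃_i I_i` of the branch domains forming the Cantor construction. -/
def IU : Set ℝ := ⋃ i ∈ Finset.range S.kI, Set.Icc (S.a (2 * i)) (S.a (2 * i + 1))

/-- `Λ_n = {x ∈ [0,1] : G^{i-1}(x) ∈ ⋃ I for all 1 ≤ i ≤ n}`. -/
def Lam (n : ℕ) : Set ℝ := {x ∈ Set.Icc (0:ℝ) 1 | ∀ i < n, S.G^[i] x ∈ S.IU}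

/-- The dynamically defined Cantor set `Λ = ⋂_n Λ_n`. -/
def Cantor : Set ℝ := ⋂ n : ℕ, S.Lam n

/-- `λ = |⋃ I_i| = Σ_i 1/m_i`. -/
noncomputable def lam : ℝ := ∑ i ∈ Finset.range S.kI, (S.a (2 * i + 1) - S.a (2 * i))

/-- `𝔪`, Lebesgue measure on `[0,1]`. -/
noncomputable def mes (_S : CantorData) : Measure ℝ := volume.restrict (Set.Icc 0 1)

/-- `ψ(x) = Σ_{i ∈ 𝓘_x} 2^{-i}` where `𝓘_x = {i ≥ 1 : G^{i-1}(x) ∉ ⋃ I}`. -/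
noncomputable def psi (x : ℝ) : ℝ :=
  ∑' i : ℕ, if S.G^[i] x ∈ S.IU then 0 else (2:ℝ)⁻¹ ^ (i + 1)

/-- `F(t) = 𝔪{x : ψ(x) ≤ t}`, the distribution function of `ψ`. -/
noncomputable def F (t : ℝ) : ℝ := (S.mes {x | S.psi x ≤ t}).toReal

/-- `φ_α = (F ∘ ψ)^{-1/α}`, with value `∞` where `F ∘ ψ` vanishes. -/
noncomputable def phi (α : ℝ) (x : ℝ) : ℝ≥0∞ :=
  ENNReal.ofReal (S.F (S.psi x)) ^ (-(1 / α))

/-- `X_n = φ_α ∘ G^n`. -/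
noncomputable def X (α : ℝ) (n : ℕ) (x : ℝ) : ℝ≥0∞ := S.phi α (S.G^[n] x)

/-- `P_n`: the points following the Cantor construction exactly `n` steps and
never entering `⋃ I` afterwards. -/
def Pset (n : ℕ) : Set ℝ :=
  {x ∈ Set.Icc (0:ℝ) 1 | (∀ i < n, S.G^[i] x ∈ S.IU) ∧ ∀ i, n ≤ i → S.G^[i] x ∉ S.IU}

/-- The family of partition intervals `(I,J)_1,…,(I,J)_{k_I+k_J}`. -/
def PieceFamily : Set (Set ℝ) :=
  ((fun i => Set.Icc (S.a (2 * i)) (S.a (2 * i + 1))) '' Set.Iio S.kI) ∪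
  ((fun i => Set.Ioo (S.a (2 * i + 1)) (S.a (2 * i + 2))) '' {i | i + 1 < S.kI}) ∪
  {Set.Ico (0:ℝ) (S.a 0), Set.Ioc (S.a (2 * S.kI - 1)) 1}

/-- The depth-`d` cylinder `C_w = ⋂_{k=1}^d G^{-(k-1)}((I,J)_{w_k})`. -/
def Cyl (d : ℕ) (w : ℕ → Set ℝ) : Set ℝ := ⋂ k ∈ Finset.range d, (S.G^[k]) ⁻¹' (w k)

/-- `C` is a depth-`d` cylinder. -/
def IsCylinder (d : ℕ) (C : Set ℝ) : Prop :=
  ∃ w : ℕ → Set ℝ, (∀ k < d, w k ∈ S.PieceFamily) ∧ C = S.Cyl d w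

/-- `Υ⁺(A,d)`: union of the depth-`d` cylinders meeting `A`. -/
def upApprox (A : Set ℝ) (d : ℕ) : Set ℝ :=
  ⋃₀ {C | S.IsCylinder d C ∧ (C ∩ A).Nonempty}

/-- `Υ⁻(A,d)`: union of the depth-`d` cylinders contained in `A`. -/
def lowApprox (A : Set ℝ) (d : ℕ) : Set ℝ :=
  ⋃₀ {C | S.IsCylinder d C ∧ C ⊆ A}

/-- `u_n(τ) = (n/τ)^{1/α}`. -/
noncomputable def un (_S : CantorData) (α τ : ℝ) (n : ℕ) : ℝ := ((n : ℝ) / τ) ^ (1 / α)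

/-- `U_n(τ) = {X_0 > u_n(τ)}`. -/
noncomputable def Un (α τ : ℝ) (n : ℕ) : Set ℝ :=
  {x ∈ Set.Icc (0:ℝ) 1 | ENNReal.ofReal (S.un α τ n) < S.X α 0 x}

/-- `U_n^{(1)}(τ) = U_n(τ) ∩ G^{-1}([0,1] ∖ U_n(τ))`. -/
noncomputable def Un1 (α τ : ℝ) (n : ℕ) : Set ℝ :=
  S.Un α τ n ∩ S.G ⁻¹' (Set.Icc 0 1 \ S.Un α τ n)

/-- `U_n(τ',τ'') = U_n(τ') ∖ U_n(τ'')`. -/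
noncomputable def UnPair (α τ' τ'' : ℝ) (n : ℕ) : Set ℝ := S.Un α τ' n \ S.Un α τ'' n

/-- `U_n(τ',τ'')^{(1)}`. -/
noncomputable def UnPair1 (α τ' τ'' : ℝ) (n : ℕ) : Set ℝ :=
  S.UnPair α τ' τ'' n ∩ S.G ⁻¹' (Set.Icc 0 1 \ S.UnPair α τ' τ'' n)

/-- `j_{n,τ}`: the least `j` with `λ^j ≤ τ/n`. -/
noncomputable def jn (τ : ℝ) (n : ℕ) : ℕ := sInf {j : ℕ | S.lam ^ j ≤ τ / n}

/-- `Γ_n^+`: outer approximation of `U_n(τ',τ'')^{(1)}` by depth-`2 j_{n,τ'}` cylinders. -/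
noncomputable def GammaPlus (α τ' τ'' : ℝ) (n : ℕ) : Set ℝ :=
  S.upApprox (S.UnPair1 α τ' τ'' n) (2 * S.jn τ' n)

/-- `Γ_n^-`: inner approximation of `U_n(τ',τ'')^{(1)}` by depth-`2 j_{n,τ'}` cylinders. -/
noncomputable def GammaMinus (α τ' τ'' : ℝ) (n : ℕ) : Set ℝ :=
  S.lowApprox (S.UnPair1 α τ' τ'' n) (2 * S.jn τ' n)

end CantorData
namespace CantorData

variable (S : CantorData)

lemma two_kI_pos : 1 ≤ 2 * S.kI - 1 := by have := S.hkI; omega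

lemma a_mono : ∀ {p q : ℕ}, p ≤ q → q ≤ 2 * S.kI - 1 → S.a p ≤ S.a q := by
  intro p q hpq hq
  induction q with
  | zero => simp [Nat.le_zero.mp hpq]
  | succ n ih =>
    rcases Nat.lt_or_ge p (n+1) with h | h
    · have h1 : S.a p ≤ S.a n := ih (by omega) (by omega)
      have h2 : S.a n < S.a (n+1) := S.ha_lt n (by have := S.hkI; omega)
      linarith
    · have : p = n + 1 := by omega
      simp [this]

lemma a_strict {p q : ℕ} (h : p < q) (hq : q ≤ 2 * S.kI - 1) : S.a p < S.a q := by
  have h1 : S.a p ≤ S.a (q - 1) := S.a_mono (by omega) (by omega)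
  have h2 : S.a (q - 1) < S.a (q - 1 + 1) := S.ha_lt _ (by have := S.hkI; omega)
  have : q - 1 + 1 = q := by omega
  rw [this] at h2
  linarith

lemma a_nonneg {q : ℕ} (hq : q ≤ 2 * S.kI - 1) : 0 ≤ S.a q :=
  le_trans S.ha0 (S.a_mono (Nat.zero_le q) hq)

lemma a_le_one {q : ℕ} (hq : q ≤ 2 * S.kI - 1) : S.a q ≤ 1 :=
  le_trans (S.a_mono hq le_rfl) S.ha1

lemma Ii_subset_Icc {i : ℕ} (hi : i < S.kI) :
    Set.Icc (S.a (2 * i)) (S.a (2 * i + 1)) ⊆ Set.Icc (0:ℝ) 1 :=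
  Set.Icc_subset_Icc (S.a_nonneg (by omega)) (S.a_le_one (by omega))

lemma IU_subset : S.IU ⊆ Set.Icc (0:ℝ) 1 := by
  intro x hx
  simp only [IU, Set.mem_iUnion] at hx
  obtain ⟨i, hi, hx⟩ := hx
  exact S.Ii_subset_Icc (Finset.mem_range.mp hi) hx

lemma IU_measurable : MeasurableSet S.IU :=
  Finset.measurableSet_biUnion _ fun _ _ => measurableSet_Icc

lemma lam_pos : 0 < S.lam := by
  refine Finset.sum_pos (fun i hi => ?_) ⟨0, Finset.mem_range.mpr S.hkI⟩
  have := S.ha_lt (2 * i) (by have := Finset.mem_range.mp hi; omega)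
  linarith

end CantorData
namespace CantorData

variable (S : CantorData)

/-- covering of `[0,1]` by the pieces. -/
lemma cover {x : ℝ} (hx : x ∈ Set.Icc (0:ℝ) 1) :
    x ∈ Set.Ico (0:ℝ) (S.a 0) ∨ x ∈ Set.Ioc (S.a (2 * S.kI - 1)) 1 ∨ x ∈ S.IU ∨
      ∃ i, i + 1 < S.kI ∧ x ∈ Set.Ioo (S.a (2 * i + 1)) (S.a (2 * i + 2)) := by
  by_cases h1 : x < S.a 0
  · exact Or.inl ⟨hx.1, h1⟩
  by_cases h2 : S.a (2 * S.kI - 1) < x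
  · exact Or.inr (Or.inl ⟨h2, hx.2⟩)
  push_neg at h1 h2
  refine Or.inr (Or.inr ?_)
  have key : ∀ i, i < S.kI → x ≤ S.a (2 * i + 1) → (x ∈ S.IU ∨
      ∃ i, i + 1 < S.kI ∧ x ∈ Set.Ioo (S.a (2 * i + 1)) (S.a (2 * i + 2))) := by
    intro i
    induction i with
    | zero =>
      intro _ hle
      left
      simp only [IU, Set.mem_iUnion]
      exact ⟨0, Finset.mem_range.mpr S.hkI, by simpa using ⟨h1, hle⟩⟩
    | succ n ih =>
      intro hn hle
      by_cases hc : x ≤ S.a (2 * n + 1)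
      · exact ih (by omega) hc
      push_neg at hc
      by_cases hc2 : x < S.a (2 * n + 2)
      · exact Or.inr ⟨n, by omega, hc, hc2⟩
      push_neg at hc2
      left
      simp only [IU, Set.mem_iUnion]
      refine ⟨n + 1, Finset.mem_range.mpr hn, ?_⟩
      have e1 : 2 * (n + 1) = 2 * n + 2 := by ring
      have e2 : 2 * (n + 1) + 1 = 2 * n + 3 := by ring
      rw [e1]
      exact ⟨hc2, by simpa [e2] using hle⟩
  have hfin : 2 * (S.kI - 1) + 1 = 2 * S.kI - 1 := by have := S.hkI; omega
  exact key (S.kI - 1) (by have := S.hkI; omega) (by rw [hfin]; exact h2)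

lemma vol_affine_preimage {s : ℝ} (hs : s ≠ 0) (c : ℝ) (C : Set ℝ) :
    volume ((fun x => s * x + c) ⁻¹' C) = ENNReal.ofReal |s|⁻¹ * volume C := by
  have h : (fun x => s * x + c) ⁻¹' C = (fun x => s * x) ⁻¹' ((fun y => y + c) ⁻¹' C) := rfl
  rw [h, Real.volume_preimage_mul_left hs, measure_preimage_add_right, abs_inv]

lemma piece_preimage {P : Set ℝ} {s c : ℝ} (hG : ∀ x ∈ P, S.G x = s * x + c) (C : Set ℝ) :
    P ∩ S.G ⁻¹' C = P ∩ (fun x => s * x + c) ⁻¹' C := by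
  ext y
  simp only [Set.mem_inter_iff, Set.mem_preimage]
  exact and_congr_right fun h => by rw [hG y h]

lemma piece_meas {P : Set ℝ} {s c : ℝ} (hG : ∀ x ∈ P, S.G x = s * x + c)
    (hP : MeasurableSet P) {C : Set ℝ} (hC : MeasurableSet C) :
    MeasurableSet (P ∩ S.G ⁻¹' C) := by
  rw [S.piece_preimage hG]
  exact hP.inter (((measurable_id.const_mul s).add_const c) hC)

lemma piece_null {P : Set ℝ} {s c : ℝ} (hs : s ≠ 0) (hG : ∀ x ∈ P, S.G x = s * x + c)
    {C : Set ℝ} (hC0 : volume C = 0) : volume (P ∩ S.G ⁻¹' C) = 0 := by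
  rw [S.piece_preimage hG]
  refine le_antisymm ?_ zero_le
  calc volume (P ∩ (fun x => s * x + c) ⁻¹' C) ≤ volume ((fun x => s * x + c) ⁻¹' C) :=
        measure_mono Set.inter_subset_right
    _ = 0 := by rw [vol_affine_preimage hs c C, hC0, mul_zero]

end CantorData
namespace CantorData

variable (S : CantorData)

lemma decomp (C : Set ℝ) :
    Set.Icc (0:ℝ) 1 ∩ S.G ⁻¹' C =
      (Set.Ico (0:ℝ) (S.a 0) ∩ S.G ⁻¹' C) ∪ (Set.Ioc (S.a (2 * S.kI - 1)) 1 ∩ S.G ⁻¹' C) ∪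
      (⋃ i ∈ Finset.range S.kI, Set.Icc (S.a (2 * i)) (S.a (2 * i + 1)) ∩ S.G ⁻¹' C) ∪
      (⋃ i ∈ Finset.range (S.kI - 1), Set.Ioo (S.a (2 * i + 1)) (S.a (2 * i + 2)) ∩ S.G ⁻¹' C) := by
  apply Set.Subset.antisymm
  · rintro x ⟨hx, hxC⟩
    rcases S.cover hx with h | h | h | ⟨i, hi, h⟩
    · exact Or.inl (Or.inl (Or.inl ⟨h, hxC⟩))
    · exact Or.inl (Or.inl (Or.inr ⟨h, hxC⟩))
    · refine Or.inl (Or.inr ?_)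
      simp only [IU, Set.mem_iUnion] at h
      obtain ⟨i, hi, hxi⟩ := h
      exact Set.mem_biUnion hi ⟨hxi, hxC⟩
    · refine Or.inr (Set.mem_biUnion (Finset.mem_range.mpr (by omega : i < S.kI - 1)) ⟨h, hxC⟩)
  · rintro x (((⟨⟨h1, h2⟩, hC⟩ | ⟨⟨h1, h2⟩, hC⟩) | h) | h)
    · exact ⟨⟨h1, le_trans h2.le (S.a_le_one (by omega))⟩, hC⟩
    · exact ⟨⟨le_trans (S.a_nonneg le_rfl) h1.le, h2⟩, hC⟩
    · simp only [Set.mem_iUnion] at h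
      obtain ⟨i, hi, ⟨hxi, hC⟩⟩ := h
      exact ⟨S.Ii_subset_Icc (Finset.mem_range.mp hi) hxi, hC⟩
    · simp only [Set.mem_iUnion] at h
      obtain ⟨i, hi, ⟨hxi, hC⟩⟩ := h
      have hi' := Finset.mem_range.mp hi
      refine ⟨⟨le_trans (S.a_nonneg (by omega)) hxi.1.le,
        le_trans hxi.2.le (S.a_le_one (by omega))⟩, hC⟩

lemma sL_exists : ∃ s c : ℝ, s ≠ 0 ∧ ∀ x ∈ Set.Ico (0:ℝ) (S.a 0), S.G x = s * x + c := by
  by_cases h : 0 < S.a 0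
  · obtain ⟨s, c, h1, h2, _⟩ := S.hGJleft h
    refine ⟨s, c, fun hs0 => by simp [hs0] at h1, h2⟩
  · have : S.a 0 = 0 := le_antisymm (by linarith [not_lt.mp h]) S.ha0
    exact ⟨1, 0, one_ne_zero, fun x hx => by rw [this] at hx; exact absurd hx (by simp)⟩

lemma sR_exists : ∃ s c : ℝ, s ≠ 0 ∧ ∀ x ∈ Set.Ioc (S.a (2 * S.kI - 1)) 1, S.G x = s * x + c := by
  by_cases h : S.a (2 * S.kI - 1) < 1
  · obtain ⟨s, c, h1, h2, _⟩ := S.hGJright h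
    refine ⟨s, c, fun hs0 => by simp [hs0] at h1, h2⟩
  · have : S.a (2 * S.kI - 1) = 1 := le_antisymm S.ha1 (by linarith [not_lt.mp h])
    exact ⟨1, 0, one_ne_zero, fun x hx => by rw [this] at hx; exact absurd hx (by simp)⟩

lemma sI_exists {i : ℕ} (hi : i < S.kI) : ∃ s c : ℝ, s ≠ 0 ∧
    (∀ x ∈ Set.Icc (S.a (2 * i)) (S.a (2 * i + 1)), S.G x = s * x + c) ∧
    Set.BijOn S.G (Set.Icc (S.a (2 * i)) (S.a (2 * i + 1))) (Set.Icc 0 1) ∧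
    |s|⁻¹ = S.a (2 * i + 1) - S.a (2 * i) := by
  obtain ⟨s, c, h1, h2, h3⟩ := S.hGI i hi
  have hlen : 0 < S.a (2 * i + 1) - S.a (2 * i) := by
    have := S.ha_lt (2 * i) (by omega); linarith
  have hs : s ≠ 0 := by
    intro hs0; rw [hs0] at h1; simp at h1
  refine ⟨s, c, hs, h2, h3, ?_⟩
  have habs : |s| ≠ 0 := abs_ne_zero.mpr hs
  field_simp
  linarith [h1]


lemma sM_exists {i : ℕ} (hi : i + 1 < S.kI) : ∃ s c : ℝ, s ≠ 0 ∧
    ∀ x ∈ Set.Ioo (S.a (2 * i + 1)) (S.a (2 * i + 2)), S.G x = s * x + c := by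
  obtain ⟨s, c, h1, h2, _⟩ := S.hGJmid i hi
  have hlen : 0 < S.a (2 * i + 2) - S.a (2 * i + 1) := by
    have := S.ha_lt (2 * i + 1) (by omega); linarith
  refine ⟨s, c, fun hs0 => by rw [hs0] at h1; simp at h1, h2⟩

lemma null_preimage {C : Set ℝ} (hC0 : volume C = 0) :
    volume (Set.Icc (0:ℝ) 1 ∩ S.G ⁻¹' C) = 0 := by
  rw [S.decomp C]
  obtain ⟨sL, cL, hsL, hL⟩ := S.sL_exists
  obtain ⟨sR, cR, hsR, hR⟩ := S.sR_exists
  refine measure_union_null (measure_union_null (measure_union_null ?_ ?_) ?_) ?_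
  · exact S.piece_null hsL hL hC0
  · exact S.piece_null hsR hR hC0
  · refine measure_biUnion_null_iff (Set.to_countable _) |>.mpr fun i hi => ?_
    obtain ⟨s, c, hs, hG, _, _⟩ := S.sI_exists (Finset.mem_range.mp hi)
    exact S.piece_null hs hG hC0
  · refine measure_biUnion_null_iff (Set.to_countable _) |>.mpr fun i hi => ?_
    have hi' : i + 1 < S.kI := by have := Finset.mem_range.mp hi; omega
    obtain ⟨s, c, hs, hG⟩ := S.sM_exists hi'
    exact S.piece_null hs hG hC0

lemma meas_G_preimage {C : Set ℝ} (hC : MeasurableSet C) :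
    MeasurableSet (Set.Icc (0:ℝ) 1 ∩ S.G ⁻¹' C) := by
  rw [S.decomp C]
  obtain ⟨sL, cL, hsL, hL⟩ := S.sL_exists
  obtain ⟨sR, cR, hsR, hR⟩ := S.sR_exists
  refine (((S.piece_meas hL measurableSet_Ico hC).union
    (S.piece_meas hR measurableSet_Ioc hC)).union ?_).union ?_
  · refine Finset.measurableSet_biUnion _ fun i hi => ?_
    obtain ⟨s, c, hs, hG, _, _⟩ := S.sI_exists (Finset.mem_range.mp hi)
    exact S.piece_meas hG measurableSet_Icc hC
  · refine Finset.measurableSet_biUnion _ fun i hi => ?_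
    have hi' : i + 1 < S.kI := by have := Finset.mem_range.mp hi; omega
    obtain ⟨s, c, hs, hG⟩ := S.sM_exists hi'
    exact S.piece_meas hG measurableSet_Ioo hC

lemma meas_iter {C : Set ℝ} (hC : MeasurableSet C) (n : ℕ) :
    MeasurableSet (Set.Icc (0:ℝ) 1 ∩ (S.G^[n]) ⁻¹' C) := by
  induction n with
  | zero => simpa using measurableSet_Icc.inter hC
  | succ n ih =>
    have heq : Set.Icc (0:ℝ) 1 ∩ (S.G^[n+1]) ⁻¹' C =
        Set.Icc (0:ℝ) 1 ∩ S.G ⁻¹' (Set.Icc (0:ℝ) 1 ∩ (S.G^[n]) ⁻¹' C) := by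
      ext x
      simp only [Set.mem_inter_iff, Set.mem_preimage, Function.iterate_succ_apply]
      exact ⟨fun ⟨h1, h2⟩ => ⟨h1, S.hGmaps h1, h2⟩, fun ⟨h1, _, h2⟩ => ⟨h1, h2⟩⟩
    rw [heq]
    exact S.meas_G_preimage ih

lemma Lam_eq (n : ℕ) : S.Lam n =
    Set.Icc (0:ℝ) 1 ∩ ⋂ i ∈ Finset.range n, (Set.Icc (0:ℝ) 1 ∩ (S.G^[i]) ⁻¹' S.IU) := by
  ext x
  simp only [Lam, Set.mem_setOf_eq, Set.mem_inter_iff, Set.mem_iInter, Set.mem_preimage,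
    Finset.mem_range]
  exact ⟨fun ⟨h1, h2⟩ => ⟨h1, fun i hi => ⟨h1, h2 i hi⟩⟩, fun ⟨h1, h2⟩ => ⟨h1, fun i hi => (h2 i hi).2⟩⟩

lemma Lam_measurable (n : ℕ) : MeasurableSet (S.Lam n) := by
  rw [S.Lam_eq]
  exact measurableSet_Icc.inter
    (Finset.measurableSet_biInter _ fun i _ => S.meas_iter S.IU_measurable i)

lemma Lam_subset_Icc (n : ℕ) : S.Lam n ⊆ Set.Icc (0:ℝ) 1 := fun x hx => hx.1

end CantorData
namespace CantorData

variable (S : CantorData)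


lemma vol_IU_inter {A : Set ℝ} (hA : MeasurableSet A) (hAsub : A ⊆ Set.Icc (0:ℝ) 1) :
    volume (S.IU ∩ S.G ⁻¹' A) = ENNReal.ofReal S.lam * volume A := by
  have heq : S.IU ∩ S.G ⁻¹' A =
      ⋃ i ∈ Finset.range S.kI, (Set.Icc (S.a (2 * i)) (S.a (2 * i + 1)) ∩ S.G ⁻¹' A) := by
    simp only [IU, Set.iUnion_inter]
  rw [heq]
  have hpiece : ∀ i < S.kI, volume (Set.Icc (S.a (2 * i)) (S.a (2 * i + 1)) ∩ S.G ⁻¹' A)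
      = ENNReal.ofReal (S.a (2 * i + 1) - S.a (2 * i)) * volume A := by
    intro i hi
    obtain ⟨s, c, hs, hG, hbij, hinv⟩ := S.sI_exists hi
    rw [S.piece_preimage hG]
    have himg : (fun x => s * x + c) '' (Set.Icc (S.a (2 * i)) (S.a (2 * i + 1)))
        = Set.Icc 0 1 := by
      rw [← hbij.image_eq]
      exact (Set.image_congr fun x hx => (hG x hx).symm)
    have hsub : (fun x => s * x + c) ⁻¹' A ⊆ Set.Icc (S.a (2 * i)) (S.a (2 * i + 1)) := by
      intro y hy
      have : s * y + c ∈ Set.Icc (0:ℝ) 1 := hAsub hy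
      rw [← himg] at this
      obtain ⟨y', hy', he⟩ := this
      have : y' = y := by
        have := he
        field_simp at this
        exact mul_left_cancel₀ hs (by simp only at he; linarith)
      rwa [← this]
    rw [Set.inter_eq_right.mpr hsub, vol_affine_preimage hs c A, hinv]
  have hdisj : (↑(Finset.range S.kI) : Set ℕ).PairwiseDisjoint
      (fun i => Set.Icc (S.a (2 * i)) (S.a (2 * i + 1)) ∩ S.G ⁻¹' A) := by
    intro i hi j hj hij
    simp only [Finset.coe_range, Set.mem_Iio] at hi hj
    have key : ∀ p q : ℕ, p < q → q < S.kI →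
        Disjoint (Set.Icc (S.a (2 * p)) (S.a (2 * p + 1)) ∩ S.G ⁻¹' A)
          (Set.Icc (S.a (2 * q)) (S.a (2 * q + 1)) ∩ S.G ⁻¹' A) := by
      intro p q hpq hq
      refine Set.disjoint_left.mpr fun y ⟨hy1, _⟩ ⟨hy2, _⟩ => ?_
      have h1 : S.a (2 * p + 1) < S.a (2 * q) := S.a_strict (by omega) (by omega)
      have := hy1.2
      have := hy2.1
      linarith
    rcases Nat.lt_or_ge i j with h | h
    · exact key i j h hj
    · exact (key j i (by omega) hi).symm
  have hmeas : ∀ i ∈ Finset.range S.kI,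
      MeasurableSet (Set.Icc (S.a (2 * i)) (S.a (2 * i + 1)) ∩ S.G ⁻¹' A) := by
    intro i hi
    obtain ⟨s, c, hs, hG, _, _⟩ := S.sI_exists (Finset.mem_range.mp hi)
    exact S.piece_meas hG measurableSet_Icc hA
  rw [measure_biUnion_finset hdisj hmeas]
  have : ∀ i ∈ Finset.range S.kI,
      volume (Set.Icc (S.a (2 * i)) (S.a (2 * i + 1)) ∩ S.G ⁻¹' A)
      = ENNReal.ofReal (S.a (2 * i + 1) - S.a (2 * i)) * volume A := fun i hi =>
    hpiece i (Finset.mem_range.mp hi)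
  rw [Finset.sum_congr rfl this, ← Finset.sum_mul, ← ENNReal.ofReal_sum_of_nonneg]
  · rfl
  · intro i hi
    have := S.ha_lt (2 * i) (by have := Finset.mem_range.mp hi; omega)
    linarith

lemma vol_IU : volume S.IU = ENNReal.ofReal S.lam := by
  have heq : S.IU = S.IU ∩ S.G ⁻¹' (Set.Icc 0 1) := by
    refine (Set.inter_eq_left.mpr fun y hy => ?_).symm
    exact S.hGmaps (S.IU_subset hy)
  rw [heq, S.vol_IU_inter measurableSet_Icc subset_rfl, Real.volume_Icc]
  norm_num

lemma lam_lt_one_aux {u v : ℝ} (huv : u < v) (hsub : Set.Ioo u v ⊆ Set.Icc (0:ℝ) 1)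
    (hdisj : ∀ y ∈ Set.Ioo u v, y ∉ S.IU) : S.lam < 1 := by
  have hd : Disjoint S.IU (Set.Ioo u v) :=
    Set.disjoint_right.mpr fun y hy => hdisj y hy
  have hle : volume S.IU + volume (Set.Ioo u v) ≤ 1 := by
    rw [← measure_union hd measurableSet_Ioo]
    have : S.IU ∪ Set.Ioo u v ⊆ Set.Icc (0:ℝ) 1 := Set.union_subset S.IU_subset hsub
    calc volume (S.IU ∪ Set.Ioo u v) ≤ volume (Set.Icc (0:ℝ) 1) := measure_mono this
      _ = 1 := by rw [Real.volume_Icc]; norm_num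
  rw [S.vol_IU, Real.volume_Ioo] at hle
  have hpos : ENNReal.ofReal (v - u) ≠ 0 := by
    simp only [ne_eq, ENNReal.ofReal_eq_zero, not_le]
    linarith
  have hlt : ENNReal.ofReal S.lam < 1 :=
    lt_of_lt_of_le (ENNReal.lt_add_right ENNReal.ofReal_ne_top hpos) hle
  exact ENNReal.ofReal_lt_one.mp hlt

lemma lam_lt_one : S.lam < 1 := by
  obtain ⟨x0, hx0⟩ := S.hkJ
  have hIcc : x0 ∈ Set.Icc (0:ℝ) 1 := hx0.1
  have hnot : x0 ∉ S.IU := hx0.2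
  rcases S.cover hIcc with h | h | h | ⟨i, hi, h⟩
  · refine S.lam_lt_one_aux (show (0:ℝ) < S.a 0 from lt_of_le_of_lt h.1 h.2)
      (Set.Ioo_subset_Icc_self.trans (Set.Icc_subset_Icc le_rfl (S.a_le_one (by omega))))
      fun y hy hyIU => ?_
    simp only [IU, Set.mem_iUnion] at hyIU
    obtain ⟨m, hm, hym⟩ := hyIU
    have : S.a 0 ≤ S.a (2 * m) := S.a_mono (Nat.zero_le _)
      (by have := Finset.mem_range.mp hm; omega)
    have := hym.1
    have := hy.2
    linarith
  · refine S.lam_lt_one_aux (show S.a (2 * S.kI - 1) < 1 from lt_of_lt_of_le h.1 h.2)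
      (Set.Ioo_subset_Icc_self.trans (Set.Icc_subset_Icc (S.a_nonneg le_rfl) le_rfl))
      fun y hy hyIU => ?_
    simp only [IU, Set.mem_iUnion] at hyIU
    obtain ⟨m, hm, hym⟩ := hyIU
    have hmk := Finset.mem_range.mp hm
    have : S.a (2 * m + 1) ≤ S.a (2 * S.kI - 1) := S.a_mono (by omega) le_rfl
    have := hym.2
    have := hy.1
    linarith
  · exact absurd h hnot
  · refine S.lam_lt_one_aux (show S.a (2 * i + 1) < S.a (2 * i + 2) from
        S.ha_lt (2 * i + 1) (by omega))
      (Set.Ioo_subset_Icc_self.trans (Set.Icc_subset_Icc (S.a_nonneg (by omega))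
        (S.a_le_one (by omega))))
      fun y hy hyIU => ?_
    simp only [IU, Set.mem_iUnion] at hyIU
    obtain ⟨m, hm, hym⟩ := hyIU
    have hmk := Finset.mem_range.mp hm
    rcases Nat.lt_or_ge m (i + 1) with hc | hc
    · have : S.a (2 * m + 1) ≤ S.a (2 * i + 1) := S.a_mono (by omega) (by omega)
      have := hym.2
      have := hy.1
      linarith
    · have : S.a (2 * i + 2) ≤ S.a (2 * m) := S.a_mono (by omega) (by omega)
      have := hym.1
      have := hy.2
      linarith

lemma vol_Lam (n : ℕ) : volume (S.Lam n) ≤ ENNReal.ofReal S.lam ^ n := by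
  induction n with
  | zero =>
    have : S.Lam 0 = Set.Icc (0:ℝ) 1 := by
      ext x; simp [Lam]
    rw [this, Real.volume_Icc]
    norm_num
  | succ n ih =>
    have hsub : S.Lam (n + 1) ⊆ S.IU ∩ S.G ⁻¹' (S.Lam n) := by
      rintro x ⟨hx1, hx2⟩
      refine ⟨hx2 0 (Nat.succ_pos n), S.hGmaps hx1, fun i hi => ?_⟩
      rw [← Function.iterate_succ_apply]
      exact hx2 (i + 1) (by omega)
    calc volume (S.Lam (n + 1)) ≤ volume (S.IU ∩ S.G ⁻¹' (S.Lam n)) := measure_mono hsub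
      _ = ENNReal.ofReal S.lam * volume (S.Lam n) :=
        S.vol_IU_inter (S.Lam_measurable n) (S.Lam_subset_Icc n)
      _ ≤ ENNReal.ofReal S.lam * ENNReal.ofReal S.lam ^ n := mul_le_mul_right ih _
      _ = ENNReal.ofReal S.lam ^ (n + 1) := (pow_succ' _ _).symm

lemma vol_cantor : volume (⋂ n, S.Lam n) = 0 := by
  refine le_antisymm ?_ zero_le
  have htend : Tendsto (fun n => ENNReal.ofReal S.lam ^ n) atTop (𝓝 0) :=
    ENNReal.tendsto_pow_atTop_nhds_zero_of_lt_one (ENNReal.ofReal_lt_one.mpr S.lam_lt_one)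
  exact ge_of_tendsto' htend fun n =>
    le_trans (measure_mono (Set.iInter_subset _ n)) (S.vol_Lam n)

end CantorData
namespace CantorData

variable (S : CantorData)

noncomputable def trm (x : ℝ) (i : ℕ) : ℝ := if S.G^[i] x ∈ S.IU then 0 else (2:ℝ)⁻¹ ^ (i + 1)

lemma psi_def (x : ℝ) : S.psi x = ∑' i, S.trm x i := rfl

lemma trm_nonneg (x : ℝ) (i : ℕ) : 0 ≤ S.trm x i := by
  unfold trm; split <;> positivity

lemma trm_le (x : ℝ) (i : ℕ) : S.trm x i ≤ (2:ℝ)⁻¹ ^ (i + 1) := by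
  unfold trm; split
  · positivity
  · exact le_rfl

lemma summable_geo : Summable (fun i : ℕ => (2:ℝ)⁻¹ ^ (i + 1)) := by
  have h : Summable (fun i : ℕ => (2:ℝ)⁻¹ ^ i) :=
    summable_geometric_of_lt_one (by norm_num) (by norm_num)
  simpa [pow_succ] using h.mul_right (2:ℝ)⁻¹

lemma tsum_geo : ∑' i : ℕ, (2:ℝ)⁻¹ ^ (i + 1) = 1 := by
  have h := tsum_geometric_of_lt_one (by norm_num : (0:ℝ) ≤ 2⁻¹) (by norm_num : (2:ℝ)⁻¹ < 1)
  have h2 : ∑' i : ℕ, (2:ℝ)⁻¹ ^ (i + 1) = (∑' i : ℕ, (2:ℝ)⁻¹ ^ i) * 2⁻¹ := by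
    rw [← tsum_mul_right]
    exact tsum_congr fun i => pow_succ _ _
  rw [h2, h]; norm_num

lemma summable_trm (x : ℝ) : Summable (S.trm x) :=
  Summable.of_nonneg_of_le (S.trm_nonneg x) (S.trm_le x) summable_geo

lemma psi_nonneg (x : ℝ) : 0 ≤ S.psi x :=
  tsum_nonneg (S.trm_nonneg x)

lemma psi_le_one (x : ℝ) : S.psi x ≤ 1 := by
  rw [psi_def]
  calc ∑' i, S.trm x i ≤ ∑' i : ℕ, (2:ℝ)⁻¹ ^ (i + 1) :=
        Summable.tsum_le_tsum (S.trm_le x) (S.summable_trm x) summable_geo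
    _ = 1 := tsum_geo

lemma trm_succ (x : ℝ) (i : ℕ) : S.trm x (i + 1) = 2⁻¹ * S.trm (S.G x) i := by
  unfold trm
  rw [Function.iterate_succ_apply]
  split
  · rw [mul_zero]
  · rw [pow_succ]
    ring

lemma psi_IU {x : ℝ} (hx : x ∈ S.IU) : S.psi x = S.psi (S.G x) / 2 := by
  rw [psi_def, Summable.tsum_eq_zero_add (S.summable_trm x)]
  have h0 : S.trm x 0 = 0 := by unfold trm; simp [hx]
  rw [h0, zero_add]
  have : ∀ i : ℕ, S.trm x (i + 1) = 2⁻¹ * S.trm (S.G x) i := S.trm_succ x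
  rw [tsum_congr this, tsum_mul_left, psi_def]
  ring

lemma psi_not_IU {x : ℝ} (hx : x ∉ S.IU) : 2⁻¹ ≤ S.psi x := by
  have h0 : S.trm x 0 = 2⁻¹ := by unfold trm; simp [hx]
  calc (2:ℝ)⁻¹ = S.trm x 0 := h0.symm
    _ ≤ S.psi x := Summable.le_tsum (S.summable_trm x) 0 fun j _ => S.trm_nonneg x j

lemma psi_not_IU_forces {x : ℝ} (hx : x ∉ S.IU) (hle : S.psi x ≤ 2⁻¹) :
    ∀ i, S.G^[i + 1] x ∈ S.IU := by
  intro i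
  have hsum : Summable (fun i => S.trm x (i + 1)) :=
    (summable_nat_add_iff 1).mpr (S.summable_trm x)
  have h0 : S.trm x 0 = 2⁻¹ := by unfold trm; simp [hx]
  have heq : S.psi x = 2⁻¹ + ∑' i, S.trm x (i + 1) := by
    rw [psi_def, Summable.tsum_eq_zero_add (S.summable_trm x), h0]
  have htail : ∑' i, S.trm x (i + 1) ≤ 0 := by linarith [heq ▸ hle]
  have hterm : S.trm x (i + 1) ≤ 0 :=
    le_trans (Summable.le_tsum hsum i fun j _ => S.trm_nonneg x (j + 1)) htail
  by_contra hnot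
  have : S.trm x (i + 1) = (2:ℝ)⁻¹ ^ (i + 2) := by unfold trm; rw [if_neg hnot]
  rw [this] at hterm
  have : (0:ℝ) < (2:ℝ)⁻¹ ^ (i + 2) := by positivity
  linarith

end CantorData
namespace CantorData

variable (S : CantorData)

noncomputable def He (x : ℝ) : ℝ≥0∞ :=
  ∑' i, Set.indicator ((Set.Icc (0:ℝ) 1 ∩ (S.G^[i]) ⁻¹' S.IU)ᶜ)
    (fun _ => ENNReal.ofReal ((2:ℝ)⁻¹ ^ (i + 1))) x

lemma He_measurable : Measurable S.He :=
  Measurable.ennreal_tsum fun i =>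
    Measurable.indicator measurable_const ((S.meas_iter S.IU_measurable i).compl)

lemma He_eq {x : ℝ} (hx : x ∈ Set.Icc (0:ℝ) 1) : S.He x = ENNReal.ofReal (S.psi x) := by
  rw [psi_def, ENNReal.ofReal_tsum_of_nonneg (S.trm_nonneg x) (S.summable_trm x)]
  refine tsum_congr fun i => ?_
  by_cases h : S.G^[i] x ∈ S.IU
  · have hmem : x ∈ Set.Icc (0:ℝ) 1 ∩ (S.G^[i]) ⁻¹' S.IU := ⟨hx, h⟩
    have : S.trm x i = 0 := by unfold trm; rw [if_pos h]
    rw [this, Set.indicator_of_notMem (not_not_intro hmem), ENNReal.ofReal_zero]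
  · have hmem : x ∈ (Set.Icc (0:ℝ) 1 ∩ (S.G^[i]) ⁻¹' S.IU)ᶜ := fun hc => h hc.2
    have : S.trm x i = (2:ℝ)⁻¹ ^ (i + 1) := by unfold trm; rw [if_neg h]
    rw [this, Set.indicator_of_mem hmem]

lemma meas_Aset (t : ℝ) : MeasurableSet ({x | S.psi x ≤ t} ∩ Set.Icc (0:ℝ) 1) := by
  by_cases ht : 0 ≤ t
  · have heq : {x | S.psi x ≤ t} ∩ Set.Icc (0:ℝ) 1 =
        Set.Icc (0:ℝ) 1 ∩ S.He ⁻¹' (Set.Iic (ENNReal.ofReal t)) := by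
      ext x
      simp only [Set.mem_inter_iff, Set.mem_setOf_eq, Set.mem_preimage, Set.mem_Iic]
      constructor
      · rintro ⟨h1, h2⟩
        exact ⟨h2, by rw [S.He_eq h2]; exact ENNReal.ofReal_le_ofReal h1⟩
      · rintro ⟨h2, h1⟩
        rw [S.He_eq h2] at h1
        exact ⟨(ENNReal.ofReal_le_ofReal_iff ht).mp h1, h2⟩
    rw [heq]
    exact measurableSet_Icc.inter (S.He_measurable measurableSet_Iic)
  · have heq : {x | S.psi x ≤ t} ∩ Set.Icc (0:ℝ) 1 = ∅ := by
      ext x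
      simp only [Set.mem_inter_iff, Set.mem_setOf_eq, Set.mem_empty_iff_false, iff_false]
      rintro ⟨h1, _⟩
      have := S.psi_nonneg x
      linarith [not_le.mp ht]
    rw [heq]
    exact MeasurableSet.empty

lemma mes_scale {t : ℝ} (ht : t ≤ 1) :
    S.mes {x | S.psi x ≤ t / 2} = ENNReal.ofReal S.lam * S.mes {x | S.psi x ≤ t} := by
  rw [mes, Measure.restrict_apply' measurableSet_Icc, Measure.restrict_apply' measurableSet_Icc]
  set A := {x | S.psi x ≤ t} ∩ Set.Icc (0:ℝ) 1 with hA
  set B := S.IU ∩ S.G ⁻¹' A with hB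
  set Z := Set.Icc (0:ℝ) 1 ∩ S.G ⁻¹' (⋂ n, S.Lam n) with hZ
  have hZ0 : volume Z = 0 := S.null_preimage S.vol_cantor
  have hBsub : B ⊆ {x | S.psi x ≤ t / 2} ∩ Set.Icc (0:ℝ) 1 := by
    rintro y ⟨hy1, hy2⟩
    obtain ⟨hGy1, _⟩ := hy2
    refine ⟨?_, S.IU_subset hy1⟩
    have := S.psi_IU hy1
    simp only [Set.mem_setOf_eq]
    rw [this]
    have : S.psi (S.G y) ≤ t := hGy1
    linarith
  have hsub2 : {x | S.psi x ≤ t / 2} ∩ Set.Icc (0:ℝ) 1 ⊆ B ∪ Z := by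
    rintro y ⟨hy1, hy2⟩
    simp only [Set.mem_setOf_eq] at hy1
    by_cases hyIU : y ∈ S.IU
    · left
      have heq := S.psi_IU hyIU
      refine ⟨hyIU, ⟨?_, S.hGmaps hy2⟩⟩
      simp only [Set.mem_setOf_eq]
      rw [heq] at hy1
      linarith
    · right
      have hforces := S.psi_not_IU_forces hyIU (by rw [show (2:ℝ)⁻¹ = 1/2 by norm_num]; linarith)
      refine ⟨hy2, ?_⟩
      simp only [Set.mem_preimage, Set.mem_iInter]
      intro n
      refine ⟨S.hGmaps hy2, fun i hi => ?_⟩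
      rw [← Function.iterate_succ_apply]
      exact hforces i
  have hvol : volume ({x | S.psi x ≤ t / 2} ∩ Set.Icc (0:ℝ) 1) = volume B := by
    refine le_antisymm ?_ (measure_mono hBsub)
    calc volume ({x | S.psi x ≤ t / 2} ∩ Set.Icc (0:ℝ) 1) ≤ volume (B ∪ Z) :=
          measure_mono hsub2
      _ ≤ volume B + volume Z := measure_union_le B Z
      _ = volume B := by rw [hZ0, add_zero]
  rw [hvol, hB, S.vol_IU_inter (S.meas_Aset t) Set.inter_subset_right]

lemma F_scale {t : ℝ} (ht : t ≤ 1) : S.F (t / 2) = S.lam * S.F t := by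
  unfold F
  rw [S.mes_scale ht, ENNReal.toReal_mul, ENNReal.toReal_ofReal S.lam_pos.le]

lemma F_step {y : ℝ} (hy : y ∈ S.IU) : S.F (S.psi y) = S.lam * S.F (S.psi (S.G y)) := by
  rw [S.psi_IU hy]
  exact S.F_scale (S.psi_le_one _)

end CantorData
/-- for `x ∈ Λ_j` and `0 ≤ k ≤ j`,
`F(ψ(G^k x)) = λ^{-k} F(ψ(x))`; equivalently `φ_α(G^k x) = λ^{k/α} φ_α(x)`
whenever `F(ψ(x)) > 0`. -/
theorem spectral_scaling (S : CantorData) (α : ℝ)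
    (hα : α ∈ Set.Ioo (0:ℝ) 2) (j : ℕ) (x : ℝ) (hx : x ∈ S.Lam j)
    (k : ℕ) (hk : k ≤ j) :
    S.F (S.psi (S.G^[k] x)) = S.lam ^ (-(k:ℤ)) * S.F (S.psi x) ∧
    (0 < S.F (S.psi x) →
      S.phi α (S.G^[k] x) = ENNReal.ofReal (S.lam ^ ((k:ℝ) / α)) * S.phi α x) := by
  have hlam0 : (0:ℝ) < S.lam := S.lam_pos
  have key : ∀ m, m ≤ j → S.F (S.psi x) = S.lam ^ m * S.F (S.psi (S.G^[m] x)) := by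
    intro m
    induction m with
    | zero => intro _; simp
    | succ n ih =>
      intro h
      have hIU : S.G^[n] x ∈ S.IU := hx.2 n (by omega)
      calc S.F (S.psi x) = S.lam ^ n * S.F (S.psi (S.G^[n] x)) := ih (by omega)
        _ = S.lam ^ n * (S.lam * S.F (S.psi (S.G (S.G^[n] x)))) := by rw [S.F_step hIU]
        _ = S.lam ^ (n + 1) * S.F (S.psi (S.G^[n + 1] x)) := by
            rw [Function.iterate_succ_apply']; ring
  have h1 : S.F (S.psi (S.G^[k] x)) = S.lam ^ (-(k:ℤ)) * S.F (S.psi x) := by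
    rw [key k hk, zpow_neg, zpow_natCast]
    rw [inv_mul_cancel_left₀ (pow_ne_zero k hlam0.ne')]
  refine ⟨h1, fun hF => ?_⟩
  have hzpow_pos : (0:ℝ) < S.lam ^ (-(k:ℤ)) := zpow_pos hlam0 _
  unfold CantorData.phi
  rw [h1, ENNReal.ofReal_mul hzpow_pos.le,
    ENNReal.mul_rpow_of_ne_top ENNReal.ofReal_ne_top ENNReal.ofReal_ne_top,
    ENNReal.ofReal_rpow_of_pos hzpow_pos]
  congr 2
  have hz : (S.lam ^ (-(k:ℤ)) : ℝ) = S.lam ^ (-(k:ℝ)) := by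
    rw [← Real.rpow_intCast S.lam (-(k:ℤ))]
    norm_cast
  rw [hz, ← Real.rpow_mul hlam0.le]
  congr 1
  push_cast
  have hα0 : α ≠ 0 := ne_of_gt hα.1
  field_simp
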